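/- Let m and p be positive integers, l = 4mp + 2p + 1 and t = 4mp + 1, so that p' = (2m+1)p. Partition {1,…,p'} into the 2m+1 intervals I_a = {(a−1)p+1, …, ap}, 1 ≤ a ≤ 2m+1. Then for k ∈ I_a: if a is odd, i_k = (2m+1)(k−1) + m + 1 − ((a−1)/2)·(2(2m+1)p + 1), and if a is even, i_k = (2m+1)(2p−k) + m + 2 + ((a−2)/2)·(2(2m+1)p + 1). -/
import Mathlib


/-- `σ_j = (-1)^{⌊(2j-1)t/l⌋}`. -/
def sigmaF (l t j : ℕ) : ℤ := (-1) ^ ((2 * j - 1) * t / l)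

/-- `r(j)`: the unique integer with `r(j) ≡ (2j-1)t (mod 2l)` and `-l < r(j) < l`. -/
def rF (l t j : ℕ) : ℤ :=
  if (((2 * j - 1) * t : ℕ) : ℤ) % (2 * l) < l then (((2 * j - 1) * t : ℕ) : ℤ) % (2 * l)
  else (((2 * j - 1) * t : ℕ) : ℤ) % (2 * l) - 2 * l

/-- `r'(j) = (|r(j)| + 1)/2`. -/
def rpF (l t j : ℕ) : ℤ := (|rF l t j| + 1) / 2

private lemma pin_aux (L c v : ℤ) (hL : 0 < L) (h1 : L*v - L < L*c) (h2 : L*c < L*v + L) :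
    c = v := by
  rcases lt_trichotomy c v with h|h|h
  · exfalso; nlinarith [mul_le_mul_of_nonneg_left (by omega : c + 1 ≤ v) hL.le]
  · exact h
  · exfalso; nlinarith [mul_le_mul_of_nonneg_left (by omega : v + 1 ≤ c) hL.le]

private lemma nopin_aux (L c v : ℤ) (hL : 0 < L) (h1 : L*v < L*c) (h2 : L*c < L*v + L) :
    False := by
  have h3 := lt_of_mul_lt_mul_left h1 hL.le
  nlinarith [mul_le_mul_of_nonneg_left (by omega : v + 1 ≤ c) hL.le]

private lemma key_aux (l t j k : ℕ) (hl : 1 ≤ l) (hodd : ((2*j-1)*t) % 2 = 1)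
    (hrj : rpF l t j = (k:ℤ)) :
    (2*(l:ℤ)) ∣ (((2*j-1)*t : ℕ) : ℤ) - (2*(k:ℤ)-1) ∨
    (2*(l:ℤ)) ∣ (((2*j-1)*t : ℕ) : ℤ) + (2*(k:ℤ)-1) := by
  set N : ℤ := (((2*j-1)*t : ℕ) : ℤ) with hN
  have hlz : (0:ℤ) < 2*(l:ℤ) := by
    have : (1:ℤ) ≤ (l:ℤ) := by exact_mod_cast hl
    linarith
  have hs0 : 0 ≤ N % (2*(l:ℤ)) := Int.emod_nonneg N (by omega)
  have hs2 : N % (2*(l:ℤ)) < 2*(l:ℤ) := Int.emod_lt_of_pos N hlz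
  have hde := Int.mul_ediv_add_emod N (2*(l:ℤ))
  have hsodd : (N % (2*(l:ℤ))) % 2 = 1 := by
    have h2 : ((2:ℤ)) ∣ 2*(l:ℤ) := ⟨(l:ℤ), rfl⟩
    rw [Int.emod_emod_of_dvd N h2]
    have : N % 2 = ((((2*j-1)*t) % 2 : ℕ) : ℤ) := by push_cast; rfl
    rw [this, hodd]; rfl
  unfold rpF rF at hrj
  rw [← hN] at hrj
  split_ifs at hrj with h
  · left
    rw [abs_of_nonneg hs0] at hrj
    have hs : N % (2*(l:ℤ)) = 2*(k:ℤ)-1 := by omega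
    exact ⟨N / (2*(l:ℤ)), by linarith⟩
  · right
    rw [abs_of_nonpos (by linarith)] at hrj
    have hs : N % (2*(l:ℤ)) = 2*(l:ℤ) - (2*(k:ℤ)-1) := by omega
    exact ⟨N / (2*(l:ℤ)) + 1, by linarith⟩

theorem stmt7 (m p l t p' : ℕ) (hm : 1 ≤ m) (hp : 1 ≤ p)
    (hl : l = 4*m*p + 2*p + 1) (ht : t = 4*m*p + 1) (hp' : p' = (2*m+1)*p)
    (a k : ℕ) (ha1 : 1 ≤ a) (ha2 : a ≤ 2*m+1)
    (hk1 : (a-1)*p + 1 ≤ k) (hk2 : k ≤ a*p)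
    (j : ℕ) (hj1 : 1 ≤ j) (hj2 : j ≤ p') (hrj : rpF l t j = (k : ℤ)) :
    (j : ℤ) =
      if a % 2 = 1 then
        (2*(m:ℤ)+1) * ((k:ℤ) - 1) + (m:ℤ) + 1 - (((a:ℤ) - 1)/2) * (2*(2*(m:ℤ)+1)*(p:ℤ) + 1)
      else
        (2*(m:ℤ)+1) * (2*(p:ℤ) - (k:ℤ)) + (m:ℤ) + 2 + (((a:ℤ) - 2)/2) * (2*(2*(m:ℤ)+1)*(p:ℤ) + 1) := by
  have hodd : ((2*j-1)*t) % 2 = 1 := by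
    have h1 : (2*j-1) % 2 = 1 := by omega
    have h2 : t % 2 = 1 := by
      rw [ht, show 4*m*p + 1 = 2*(2*m*p)+1 from by ring]
      simpa using Nat.mul_add_mod 2 (2*m*p) 1
    rw [Nat.mul_mod, h1, h2]
  have hl1 : 1 ≤ l := by rw [hl]; exact Nat.le_add_left 1 _
  have hd := key_aux l t j k hl1 hodd hrj
  have hcastj : ((2*j-1 : ℕ) : ℤ) = 2*(j:ℤ)-1 := by omega
  have hcast : (((2*j-1)*t : ℕ) : ℤ) = (2*(j:ℤ)-1) * (t:ℤ) := by
    rw [Nat.cast_mul, hcastj]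
  have htz : (t:ℤ) = 4*(m:ℤ)*(p:ℤ)+1 := by rw [ht]; push_cast; ring
  have hlz : (l:ℤ) = 4*(m:ℤ)*(p:ℤ)+2*(p:ℤ)+1 := by rw [hl]; push_cast; ring
  rw [hcast, htz, hlz] at hd
  have hLpos : (0:ℤ) < 2*(4*(m:ℤ)*(p:ℤ)+2*(p:ℤ)+1) := by positivity
  have hj1z : 1 ≤ (j:ℤ) := by exact_mod_cast hj1
  have hjz : (j:ℤ) ≤ (2*(m:ℤ)+1)*(p:ℤ) := by
    rw [hp'] at hj2; exact_mod_cast hj2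
  have hm0 : (0:ℤ) ≤ (m:ℤ) := by positivity
  have hp1 : (1:ℤ) ≤ (p:ℤ) := by exact_mod_cast hp
  have hmp : (0:ℤ) ≤ (m:ℤ)*(p:ℤ) := by positivity
  rcases Nat.mod_two_eq_zero_or_one a with hpar | hpar
  · -- a even
    obtain ⟨b, hb⟩ : ∃ b, a = 2*b+2 := ⟨a/2 - 1, by omega⟩
    have hbm : b + 1 ≤ m := by omega
    rw [show a - 1 = 2*b+1 from by omega] at hk1
    rw [hb] at hk2
    have hk1z : (2*(b:ℤ)+1)*(p:ℤ)+1 ≤ (k:ℤ) := by exact_mod_cast hk1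
    have hk2z : (k:ℤ) ≤ (2*(b:ℤ)+2)*(p:ℤ) := by exact_mod_cast hk2
    have hbmz : (b:ℤ) + 1 ≤ (m:ℤ) := by exact_mod_cast hbm
    have hb0 : (0:ℤ) ≤ (b:ℤ) := by positivity
    have hbp : (0:ℤ) ≤ (b:ℤ)*(p:ℤ) := by positivity
    have hbpm : (0:ℤ) ≤ (b:ℤ)*(p:ℤ)*(m:ℤ) := by positivity
    rw [if_neg (by omega)]
    have haz : ((a:ℤ)-2)/2 = (b:ℤ) := by
      have : (a:ℤ) = 2*(b:ℤ)+2 := by exact_mod_cast hb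
      rw [this]; omega
    rw [haz]
    have f_up : (0:ℤ) ≤ ((2*(b:ℤ)+2)*(p:ℤ) - (k:ℤ))*(2*(m:ℤ)+1) :=
      mul_nonneg (by linarith) (by positivity)
    have f_lo : (0:ℤ) ≤ ((k:ℤ) - ((2*(b:ℤ)+1)*(p:ℤ)+1))*(2*(m:ℤ)+1) :=
      mul_nonneg (by linarith) (by positivity)
    rcases hd with ⟨c, hc⟩ | ⟨c, hc⟩
    · -- contradiction case
      exfalso
      have hc2 : (2*(j:ℤ)-1) - (2*(k:ℤ)-1)*(2*(m:ℤ)+1)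
          = 2*(4*(m:ℤ)*(p:ℤ)+2*(p:ℤ)+1)*(c*(2*(m:ℤ)+1) - (m:ℤ)*(2*(j:ℤ)-1)) := by
        linear_combination (2*(m:ℤ)+1)*hc
      refine nopin_aux (2*(4*(m:ℤ)*(p:ℤ)+2*(p:ℤ)+1))
        (c*(2*(m:ℤ)+1) - (m:ℤ)*(2*(j:ℤ)-1)) (-((b:ℤ)+1)) hLpos ?_ ?_
      · rw [← hc2]; linarith [f_up, hj1z, hb0, hm0]
      · rw [← hc2]; linarith [f_lo, hjz, hbmz]
    · have hc2 : (2*(j:ℤ)-1) + (2*(k:ℤ)-1)*(2*(m:ℤ)+1)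
          = 2*(4*(m:ℤ)*(p:ℤ)+2*(p:ℤ)+1)*(c*(2*(m:ℤ)+1) - (m:ℤ)*(2*(j:ℤ)-1)) := by
        linear_combination (2*(m:ℤ)+1)*hc
      have hceq : c*(2*(m:ℤ)+1) - (m:ℤ)*(2*(j:ℤ)-1) = (b:ℤ)+1 := by
        refine pin_aux (2*(4*(m:ℤ)*(p:ℤ)+2*(p:ℤ)+1)) _ ((b:ℤ)+1) hLpos ?_ ?_
        · rw [← hc2]; linarith [f_lo, hj1z, hbmz, hmp, hp1]
        · rw [← hc2]; linarith [f_up, hjz, hb0, hm0, hmp, hp1]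
      rw [hceq] at hc2
      linarith [hc2]
  · -- a odd
    obtain ⟨b, hb⟩ : ∃ b, a = 2*b+1 := ⟨a/2, by omega⟩
    have hbm : b ≤ m := by omega
    rw [show a - 1 = 2*b from by omega] at hk1
    rw [hb] at hk2
    have hk1z : 2*(b:ℤ)*(p:ℤ)+1 ≤ (k:ℤ) := by exact_mod_cast hk1
    have hk2z : (k:ℤ) ≤ (2*(b:ℤ)+1)*(p:ℤ) := by exact_mod_cast hk2
    have hbmz : (b:ℤ) ≤ (m:ℤ) := by exact_mod_cast hbm
    have hb0 : (0:ℤ) ≤ (b:ℤ) := by positivity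
    have hbp : (0:ℤ) ≤ (b:ℤ)*(p:ℤ) := by positivity
    have hbpm : (0:ℤ) ≤ (b:ℤ)*(p:ℤ)*(m:ℤ) := by positivity
    rw [if_pos hpar]
    have haz : ((a:ℤ)-1)/2 = (b:ℤ) := by
      have : (a:ℤ) = 2*(b:ℤ)+1 := by exact_mod_cast hb
      rw [this]; omega
    rw [haz]
    have f_up : (0:ℤ) ≤ ((2*(b:ℤ)+1)*(p:ℤ) - (k:ℤ))*(2*(m:ℤ)+1) :=
      mul_nonneg (by linarith) (by positivity)
    have f_lo : (0:ℤ) ≤ ((k:ℤ) - (2*(b:ℤ)*(p:ℤ)+1))*(2*(m:ℤ)+1) :=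
      mul_nonneg (by linarith) (by positivity)
    rcases hd with ⟨c, hc⟩ | ⟨c, hc⟩
    · have hc2 : (2*(j:ℤ)-1) - (2*(k:ℤ)-1)*(2*(m:ℤ)+1)
          = 2*(4*(m:ℤ)*(p:ℤ)+2*(p:ℤ)+1)*(c*(2*(m:ℤ)+1) - (m:ℤ)*(2*(j:ℤ)-1)) := by
        linear_combination (2*(m:ℤ)+1)*hc
      have hceq : c*(2*(m:ℤ)+1) - (m:ℤ)*(2*(j:ℤ)-1) = -(b:ℤ) := by
        refine pin_aux (2*(4*(m:ℤ)*(p:ℤ)+2*(p:ℤ)+1)) _ (-(b:ℤ)) hLpos ?_ ?_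
        · rw [← hc2]; linarith [f_up, hj1z, hb0, hm0, hmp, hp1]
        · rw [← hc2]; linarith [f_lo, hjz, hbmz, hmp, hp1]
      rw [hceq] at hc2
      linarith [hc2]
    · exfalso
      have hc2 : (2*(j:ℤ)-1) + (2*(k:ℤ)-1)*(2*(m:ℤ)+1)
          = 2*(4*(m:ℤ)*(p:ℤ)+2*(p:ℤ)+1)*(c*(2*(m:ℤ)+1) - (m:ℤ)*(2*(j:ℤ)-1)) := by
        linear_combination (2*(m:ℤ)+1)*hc
      refine nopin_aux (2*(4*(m:ℤ)*(p:ℤ)+2*(p:ℤ)+1))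
        (c*(2*(m:ℤ)+1) - (m:ℤ)*(2*(j:ℤ)-1)) ((b:ℤ)) hLpos ?_ ?_
      · rw [← hc2]; linarith [f_lo, hj1z, hbmz]
      · rw [← hc2]; linarith [f_up, hjz, hb0, hm0]
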